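/- Let $d\ge1$, $-1 \le B < A \le 1$, and let $(\gamma_n)_{n\ge1}$ be strictly increasing positive reals with $\sum_{n\ge1}\gamma_n^{-(d+1)} < \infty$. Define, for $r\in(0,\gamma_1)$, $\psi(r) = -(d+1)\sum_{n\ge1}\frac{r^{d+1}}{\gamma_n^{d+1}-r^{d+1}}$ and $v(r) = \psi(r) + \frac{A-B}{1+|B|}$. Then $v$ is strictly decreasing on $(0,\gamma_1)$, $\lim_{r\to 0^+} v(r) = \frac{A-B}{1+|B|} > 0$, $\lim_{r\to\gamma_1^-} v(r) = -\infty$, and hence $v$ has a unique zero in $(0,\gamma_1)$. -/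

import Mathlib

open Filter Set

theorem stmt_11 (d : ℕ) (hd : 1 ≤ d) (A B : ℝ) (hB : -1 ≤ B) (hBA : B < A) (hA : A ≤ 1)
    (γ : ℕ → ℝ) (hγ : StrictMono γ) (hγpos : ∀ n, 0 < γ n)
    (hsum : Summable fun n => ((γ n) ^ (d + 1))⁻¹)
    (ψ v : ℝ → ℝ)
    (hψ : ∀ r, ψ r = -(((d : ℝ) + 1) * ∑' n, r ^ (d + 1) / ((γ n) ^ (d + 1) - r ^ (d + 1))))
    (hv : ∀ r, v r = ψ r + (A - B) / (1 + |B|)) :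
    StrictAntiOn v (Set.Ioo (0 : ℝ) (γ 0)) ∧
    Filter.Tendsto v (nhdsWithin 0 (Set.Ioi 0)) (nhds ((A - B) / (1 + |B|))) ∧
    (A - B) / (1 + |B|) > 0 ∧
    Filter.Tendsto v (nhdsWithin (γ 0) (Set.Iio (γ 0))) Filter.atBot ∧
    ∃! r, r ∈ Set.Ioo (0 : ℝ) (γ 0) ∧ v r = 0 := by
  set m := d + 1 with hmdef
  have hm0 : m ≠ 0 := Nat.succ_ne_zero d
  set c : ℝ := (A - B) / (1 + |B|) with hcdef
  have hγ0 : 0 < γ 0 := hγpos 0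
  have hγn : ∀ n, γ 0 ≤ γ n := fun n => hγ.monotone (Nat.zero_le n)
  have hγnm : ∀ n, (0:ℝ) < γ n ^ m := fun n => pow_pos (hγpos n) m
  set t : ℕ → ℝ → ℝ := fun n r => r ^ m / (γ n ^ m - r ^ m) with htdef
  set g : ℝ → ℝ := fun r => ∑' n, t n r with hgdef
  have hveq : v = fun r => -((m : ℝ) * g r) + c := by
    funext r
    rw [hv, hψ]
    simp only [hgdef]
    push_cast [hmdef]
    ring
  have hcpos : 0 < c := by
    have h1 : (0:ℝ) < 1 + |B| := by positivity
    exact div_pos (sub_pos.2 hBA) h1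
  -- denominator positivity
  have hden : ∀ n r, 0 ≤ r → r < γ 0 → 0 < γ n ^ m - r ^ m := by
    intro n r hr hrγ
    have : r ^ m < γ n ^ m := pow_lt_pow_left₀ (lt_of_lt_of_le hrγ (hγn n)) hr hm0
    linarith
  have htnonneg : ∀ n r, 0 ≤ r → r < γ 0 → 0 ≤ t n r := by
    intro n r hr hrγ
    exact div_nonneg (pow_nonneg hr m) (hden n r hr hrγ).le
  have hcb : ∀ b : ℝ, 0 < b → b < γ 0 → (0:ℝ) < 1 - (b / γ 0) ^ m := by
    intro b hb hbγ
    have : (b / γ 0) ^ m < 1 := pow_lt_one₀ (by positivity) ((div_lt_one hγ0).2 hbγ) hm0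
    linarith
  -- key denominator bound
  have hkeyden : ∀ b : ℝ, 0 < b → b < γ 0 → ∀ r, 0 ≤ r → r ≤ b →
      ∀ n, γ n ^ m * (1 - (b / γ 0) ^ m) ≤ γ n ^ m - r ^ m := by
    intro b hb hbγ r hr hrb n
    have h1 : r ^ m ≤ b ^ m := pow_le_pow_left₀ hr hrb m
    have h2 : b ^ m ≤ γ n ^ m * (b / γ 0) ^ m := by
      have h3 : γ 0 ^ m ≤ γ n ^ m := pow_le_pow_left₀ hγ0.le (hγn n) m
      have h4 : γ 0 ^ m * (b / γ 0) ^ m = b ^ m := by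
        rw [div_pow]
        field_simp
      nlinarith [pow_nonneg (by positivity : (0:ℝ) ≤ b / γ 0) m]
    nlinarith
  -- key bound
  have hkey : ∀ b : ℝ, 0 < b → b < γ 0 → ∀ r, 0 ≤ r → r ≤ b →
      ∀ n, t n r ≤ (r ^ m / (1 - (b / γ 0) ^ m)) * (γ n ^ m)⁻¹ := by
    intro b hb hbγ r hr hrb n
    have hc1 := hcb b hb hbγ
    have hdpos : 0 < γ n ^ m * (1 - (b / γ 0) ^ m) := mul_pos (hγnm n) hc1
    have : t n r ≤ r ^ m / (γ n ^ m * (1 - (b / γ 0) ^ m)) :=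
      div_le_div₀ (pow_nonneg hr m) le_rfl hdpos (hkeyden b hb hbγ r hr hrb n)
    calc t n r ≤ r ^ m / (γ n ^ m * (1 - (b / γ 0) ^ m)) := this
    _ = (r ^ m / (1 - (b / γ 0) ^ m)) * (γ n ^ m)⁻¹ := by
        field_simp
  have hsum' : Summable fun n => ((γ n : ℝ) ^ m)⁻¹ := hsum
  -- summability
  have hsumm : ∀ r, 0 ≤ r → r < γ 0 → Summable fun n => t n r := by
    intro r hr hrγ
    set b := (r + γ 0) / 2 with hbdef
    have hb : 0 < b := by positivity
    have hbγ : b < γ 0 := by rw [hbdef]; linarith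
    have hrb : r ≤ b := by rw [hbdef]; linarith
    exact Summable.of_nonneg_of_le (fun n => htnonneg n r hr hrγ)
      (fun n => hkey b hb hbγ r hr hrb n) (hsum'.mul_left _)
  -- strict monotonicity of g
  have hgmono : ∀ r1 r2, 0 < r1 → r1 < r2 → r2 < γ 0 → g r1 < g r2 := by
    intro r1 r2 hr1 hr12 hr2γ
    have hr1γ : r1 < γ 0 := hr12.trans hr2γ
    have hterm : ∀ n, t n r1 < t n r2 := by
      intro n
      have h1 : r1 ^ m < r2 ^ m := pow_lt_pow_left₀ hr12 hr1.le hm0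
      have h2 : γ n ^ m - r2 ^ m < γ n ^ m - r1 ^ m := by linarith
      have h3 : 0 < γ n ^ m - r2 ^ m := hden n r2 (by linarith) hr2γ
      calc t n r1 = r1 ^ m / (γ n ^ m - r1 ^ m) := rfl
      _ < r2 ^ m / (γ n ^ m - r2 ^ m) := by
          exact div_lt_div₀ h1 h2.le (pow_nonneg (by linarith) m) h3
      _ = t n r2 := rfl
    exact Summable.tsum_lt_tsum (fun n => (hterm n).le) (hterm 0)
      (hsumm r1 hr1.le hr1γ) (hsumm r2 (by linarith) hr2γ)
  have hmpos : (0:ℝ) < (m:ℝ) := by positivity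
  have hanti : StrictAntiOn v (Set.Ioo (0 : ℝ) (γ 0)) := by
    intro x hx y hy hxy
    rw [hveq]
    simp only
    have := hgmono x y hx.1 hxy hy.2
    nlinarith
  -- limit at 0
  have hmem0 : Set.Ioo (0:ℝ) (γ 0 / 2) ∈ nhdsWithin 0 (Set.Ioi 0) := by
    apply mem_nhdsWithin.2 ⟨Set.Iio (γ 0 / 2), isOpen_Iio, by simp; positivity, ?_⟩
    rintro x ⟨hx1, hx2⟩; exact ⟨hx2, hx1⟩
  have hg0 : Tendsto g (nhdsWithin 0 (Set.Ioi 0)) (nhds 0) := by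
    have hb : 0 < γ 0 / 2 := by positivity
    have hbγ : γ 0 / 2 < γ 0 := by linarith
    have hc1 := hcb _ hb hbγ
    set S := ∑' n, ((γ n : ℝ) ^ m)⁻¹ with hSdef
    apply squeeze_zero' (g := fun r => (r ^ m / (1 - (γ 0 / 2 / γ 0) ^ m)) * S)
    · filter_upwards [hmem0] with r hr
      exact tsum_nonneg fun n => htnonneg n r hr.1.le (hr.2.trans hbγ)
    · filter_upwards [hmem0] with r hr
      calc g r ≤ ∑' n, (r ^ m / (1 - (γ 0 / 2 / γ 0) ^ m)) * (γ n ^ m)⁻¹ :=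
            Summable.tsum_le_tsum (fun n => hkey _ hb hbγ r hr.1.le hr.2.le n)
              (hsumm r hr.1.le (hr.2.trans hbγ)) (hsum'.mul_left _)
      _ = (r ^ m / (1 - (γ 0 / 2 / γ 0) ^ m)) * S := tsum_mul_left
    · have hco : Continuous fun r : ℝ => (r ^ m / (1 - (γ 0 / 2 / γ 0) ^ m)) * S :=
        (((continuous_pow m).div_const _).mul continuous_const)
      simpa [zero_pow hm0] using (hco.tendsto 0).mono_left nhdsWithin_le_nhds
  have hv0 : Tendsto v (nhdsWithin 0 (Set.Ioi 0)) (nhds c) := by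
    rw [hveq]
    have h1 : Tendsto (fun r => -((m:ℝ) * g r) + c) (nhdsWithin 0 (Set.Ioi 0))
        (nhds (-((m:ℝ) * 0) + c)) := ((hg0.const_mul _).neg).add_const c
    simpa using h1
  -- limit at γ 0 from the left
  have hmemγ : Set.Ioo (0:ℝ) (γ 0) ∈ nhdsWithin (γ 0) (Set.Iio (γ 0)) := by
    apply mem_nhdsWithin.2 ⟨Set.Ioi 0, isOpen_Ioi, hγ0, ?_⟩
    rintro x ⟨hx1, hx2⟩; exact ⟨hx1, hx2⟩
  have hgtop : Tendsto g (nhdsWithin (γ 0) (Set.Iio (γ 0))) atTop := by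
    have h1 : Tendsto (fun r : ℝ => γ 0 ^ m - r ^ m) (nhdsWithin (γ 0) (Set.Iio (γ 0)))
        (nhdsWithin 0 (Set.Ioi 0)) := by
      apply tendsto_nhdsWithin_of_tendsto_nhds_of_eventually_within _
      · have hco : Continuous fun r : ℝ => γ 0 ^ m - r ^ m := continuous_const.sub (continuous_pow m)
        simpa using (hco.tendsto (γ 0)).mono_left nhdsWithin_le_nhds
      · filter_upwards [hmemγ] with r hr
        exact hden 0 r hr.1.le hr.2
    have h2 : Tendsto (fun r : ℝ => (γ 0 ^ m - r ^ m)⁻¹)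
        (nhdsWithin (γ 0) (Set.Iio (γ 0))) atTop := tendsto_inv_nhdsGT_zero.comp h1
    have h3 : Tendsto (fun r : ℝ => r ^ m) (nhdsWithin (γ 0) (Set.Iio (γ 0)))
        (nhds (γ 0 ^ m)) := ((continuous_pow m).tendsto (γ 0)).mono_left nhdsWithin_le_nhds
    have h4 : Tendsto (t 0) (nhdsWithin (γ 0) (Set.Iio (γ 0))) atTop := by
      have h5 := Filter.Tendsto.pos_mul_atTop (pow_pos hγ0 m) h3 h2
      simpa [htdef, div_eq_mul_inv] using h5
    apply tendsto_atTop_mono' _ ?_ h4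
    filter_upwards [hmemγ] with r hr
    exact Summable.le_tsum (hsumm r hr.1.le hr.2) 0 (fun n _ => htnonneg n r hr.1.le hr.2)
  have hvbot : Tendsto v (nhdsWithin (γ 0) (Set.Iio (γ 0))) atBot := by
    rw [hveq]
    have h1 : Tendsto (fun r => (m:ℝ) * g r) (nhdsWithin (γ 0) (Set.Iio (γ 0))) atTop :=
      hgtop.const_mul_atTop hmpos
    have h2 : Tendsto (fun r => -((m:ℝ) * g r)) (nhdsWithin (γ 0) (Set.Iio (γ 0))) atBot :=
      tendsto_neg_atTop_atBot.comp h1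
    exact tendsto_atBot_add_const_right _ c h2
  -- continuity
  have hgcont : ∀ x ∈ Set.Ioo (0:ℝ) (γ 0), ContinuousAt g x := by
    intro x hx
    set b := (x + γ 0) / 2 with hbdef
    have hb : 0 < b := by rw [hbdef]; linarith [hx.1]
    have hbγ : b < γ 0 := by rw [hbdef]; linarith [hx.2]
    have hxb : x < b := by rw [hbdef]; linarith [hx.2]
    have hcont : ContinuousOn g (Set.Ioo (0:ℝ) b) := by
      apply continuousOn_tsum (u := fun n => (b ^ m / (1 - (b / γ 0) ^ m)) * (γ n ^ m)⁻¹)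
      · intro n
        apply ContinuousOn.div (continuous_pow m).continuousOn
          ((continuous_const.sub (continuous_pow m)).continuousOn)
        intro r hr
        exact (hden n r hr.1.le (hr.2.trans hbγ)).ne'
      · exact hsum'.mul_left _
      · intro n r hr
        rw [Real.norm_eq_abs, abs_of_nonneg (htnonneg n r hr.1.le (hr.2.trans hbγ))]
        calc t n r ≤ (r ^ m / (1 - (b / γ 0) ^ m)) * (γ n ^ m)⁻¹ :=
              hkey b hb hbγ r hr.1.le hr.2.le n
        _ ≤ (b ^ m / (1 - (b / γ 0) ^ m)) * (γ n ^ m)⁻¹ := by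
            have h1 : r ^ m ≤ b ^ m := pow_le_pow_left₀ hr.1.le hr.2.le m
            have h2 : (0:ℝ) < 1 - (b / γ 0) ^ m := hcb b hb hbγ
            have h3 : (0:ℝ) ≤ (γ n ^ m)⁻¹ := inv_nonneg.2 (hγnm n).le
            gcongr
    exact hcont.continuousAt (isOpen_Ioo.mem_nhds ⟨hx.1, hxb⟩)
  have hvcont : ∀ x ∈ Set.Ioo (0:ℝ) (γ 0), ContinuousAt v x := by
    intro x hx
    rw [hveq]
    exact ((continuousAt_const.mul (hgcont x hx)).neg).add continuousAt_const
  -- existence of a zero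
  have hex : ∃ r ∈ Set.Ioo (0:ℝ) (γ 0), v r = 0 := by
    obtain ⟨a, haI, hva⟩ : ∃ a, a ∈ Set.Ioo (0:ℝ) (γ 0) ∧ 0 < v a := by
      have h1 : ∀ᶠ r in nhdsWithin 0 (Set.Ioi 0), 0 < v r :=
        hv0.eventually (eventually_gt_nhds hcpos)
      have h2 : Set.Ioo (0:ℝ) (γ 0) ∈ nhdsWithin 0 (Set.Ioi 0) := by
        apply mem_nhdsWithin.2 ⟨Set.Iio (γ 0), isOpen_Iio, hγ0, ?_⟩
        rintro x ⟨hx1, hx2⟩; exact ⟨hx2, hx1⟩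
      exact ((Filter.eventually_mem_set.2 h2).and h1).exists
    obtain ⟨b, hbI, hvb⟩ : ∃ b, b ∈ Set.Ioo a (γ 0) ∧ v b < 0 := by
      have h1 : ∀ᶠ r in nhdsWithin (γ 0) (Set.Iio (γ 0)), v r < 0 :=
        hvbot.eventually (eventually_lt_atBot 0)
      have h2 : Set.Ioo a (γ 0) ∈ nhdsWithin (γ 0) (Set.Iio (γ 0)) := by
        apply mem_nhdsWithin.2 ⟨Set.Ioi a, isOpen_Ioi, haI.2, ?_⟩
        rintro x ⟨hx1, hx2⟩; exact ⟨hx1, hx2⟩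
      exact ((Filter.eventually_mem_set.2 h2).and h1).exists
    have hab : a ≤ b := hbI.1.le
    have hconta : ContinuousOn v (Set.Icc a b) := fun x hx =>
      (hvcont x ⟨lt_of_lt_of_le haI.1 hx.1, lt_of_le_of_lt hx.2 hbI.2⟩).continuousWithinAt
    have h0 : (0:ℝ) ∈ Set.Icc (v b) (v a) := ⟨hvb.le, hva.le⟩
    obtain ⟨r, hrI, hvr⟩ := intermediate_value_Icc' hab hconta h0
    exact ⟨r, ⟨lt_of_lt_of_le haI.1 hrI.1, lt_of_le_of_lt hrI.2 hbI.2⟩, hvr⟩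
  obtain ⟨r, hrI, hvr⟩ := hex
  exact ⟨hanti, hv0, hcpos, hvbot, r, ⟨hrI, hvr⟩,
    fun y hy => hanti.injOn hy.1 hrI (by rw [hy.2, hvr])⟩
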